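/- Let C₁ > 0 and let (z_n)_{n≥1} be a sequence of real numbers satisfying |z_n − π(n − 1/4)| ≤ C₁/n for all n ≥ 1. Then there exist constants c > 0 and C > 0 (depending only on C₁) such that for every ℓ ∈ ℝ and every axis-parallel square Q ⊂ ℝ² of side length R₁ ≥ 3, the number of pairs (n₁, n₂) of positive integers with (n₁, n₂) ∈ Q and |z_{n₁}² + z_{n₂}² − ℓ| < 1 is at most C · exp(c · log R₁ / log log R₁). -/

import Mathlib

open Real



lemma sq_sum_eq_zero {a b : ℤ} (h : a^2 + b^2 = 0) : a = 0 ∧ b = 0 := by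
  constructor <;> nlinarith [sq_nonneg a, sq_nonneg b]


lemma jarnik_num {D2 W U VW2 Br m : ℝ} (hD : 1 ≤ D2) (hWeq : W = 4*m - U)
    (hU0 : 0 ≤ U) (hUB : U ≤ Br) (hVW2 : VW2 ≤ 4*Br^2) (hVW0 : 0 ≤ VW2)
    (hkey : D2 * W = VW2 * U) (hBr0 : 0 ≤ Br) (hBig : Br^3 + Br < m) : False := by
  have hW0 : 0 ≤ W := by nlinarith
  have h1 : W ≤ D2 * W := le_mul_of_one_le_left hW0 hD
  have h2 : VW2 * U ≤ (4*Br^2) * Br := mul_le_mul hVW2 hUB hU0 (by positivity)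
  nlinarith

lemma jarnik_core (m u₁ u₂ v₁ v₂ w₁ w₂ : ℤ)
    (huw : u₁*w₁ + u₂*w₂ = 0)
    (hW : w₁^2 + w₂^2 = 4*m - (u₁^2 + u₂^2))
    (hvt : v₁*(w₁+v₁-u₁) + v₂*(w₂+v₂-u₂) = 0)
    (hune : ¬(u₁ = 0 ∧ u₂ = 0))
    (hvne : ¬(v₁ = 0 ∧ v₂ = 0))
    (hene : ¬(v₁ - u₁ = 0 ∧ v₂ - u₂ = 0))
    (Br : ℝ)
    (hu : ((u₁:ℝ))^2 + ((u₂:ℝ))^2 ≤ Br)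
    (hv : ((v₁:ℝ))^2 + ((v₂:ℝ))^2 ≤ Br)
    (hBig : Br^3 + Br < (m : ℝ)) : False := by
  have hVW : v₁*w₁ + v₂*w₂ = (u₁*v₁ + u₂*v₂) - (v₁^2 + v₂^2) := by linear_combination hvt
  have key : (u₁*v₂ - u₂*v₁)^2 * (w₁^2 + w₂^2) = (v₁*w₁ + v₂*w₂)^2 * (u₁^2 + u₂^2) := by
    linear_combination ((u₁*w₁+u₂*w₂)*(v₁^2+v₂^2) - 2*(v₁*w₁+v₂*w₂)*(u₁*v₁+u₂*v₂)
      + (u₁*w₁+u₂*w₂)*(v₁^2+v₂^2) - (u₁*w₁+u₂*w₂)*(v₁^2+v₂^2)) * huw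
  by_cases hD0 : u₁*v₂ - u₂*v₁ = 0
  · have hut : u₁ * (w₁+v₁-u₁) + u₂ * (w₂+v₂-u₂) = 0 := by
      have e1 : (u₁ * (w₁+v₁-u₁) + u₂ * (w₂+v₂-u₂)) * v₁ = 0 := by
        linear_combination u₁ * hvt - (w₂+v₂-u₂) * hD0
      have e2 : (u₁ * (w₁+v₁-u₁) + u₂ * (w₂+v₂-u₂)) * v₂ = 0 := by
        linear_combination u₂ * hvt + (w₁+v₁-u₁) * hD0
      rcases mul_eq_zero.mp e1 with h | h
      · exact h
      rcases mul_eq_zero.mp e2 with h' | h'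
      · exact h'
      exact absurd ⟨h, h'⟩ hvne
    have hue : u₁ * (v₁ - u₁) + u₂ * (v₂ - u₂) = 0 := by linear_combination hut - huw
    have hce : u₁ * (v₂ - u₂) - u₂ * (v₁ - u₁) = 0 := by linear_combination hD0
    have lag : (u₁^2 + u₂^2) * ((v₁-u₁)^2 + (v₂-u₂)^2) = 0 := by
      linear_combination (u₁*(v₁-u₁)+u₂*(v₂-u₂)) * hue + (u₁ * (v₂ - u₂) - u₂ * (v₁ - u₁)) * hce
    rcases mul_eq_zero.mp lag with h | h
    · exact hune (sq_sum_eq_zero h)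
    · exact hene (sq_sum_eq_zero h)
  · have hD1 : (1 : ℤ) ≤ (u₁*v₂ - u₂*v₁)^2 := by
      rcases lt_or_gt_of_ne hD0 with h | h <;> nlinarith
    have hD1R : (1:ℝ) ≤ ((u₁:ℝ)*v₂ - (u₂:ℝ)*v₁)^2 := by exact_mod_cast hD1
    have keyR : ((u₁:ℝ)*v₂ - (u₂:ℝ)*v₁)^2 * ((w₁:ℝ)^2 + (w₂:ℝ)^2)
        = ((v₁:ℝ)*w₁ + (v₂:ℝ)*w₂)^2 * ((u₁:ℝ)^2 + (u₂:ℝ)^2) := by exact_mod_cast key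
    have hWR : (w₁:ℝ)^2 + (w₂:ℝ)^2 = 4*(m:ℝ) - ((u₁:ℝ)^2 + (u₂:ℝ)^2) := by exact_mod_cast hW
    have hVWR : (v₁:ℝ)*w₁ + (v₂:ℝ)*w₂ = ((u₁:ℝ)*v₁ + (u₂:ℝ)*v₂) - ((v₁:ℝ)^2 + (v₂:ℝ)^2) := by
      exact_mod_cast hVW
    have hcs : ((u₁:ℝ)*v₁ + (u₂:ℝ)*v₂)^2 ≤ ((u₁:ℝ)^2+(u₂:ℝ)^2) * ((v₁:ℝ)^2+(v₂:ℝ)^2) := by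
      nlinarith [sq_nonneg ((u₁:ℝ)*v₂ - (u₂:ℝ)*v₁)]
    have hu0 : (0:ℝ) ≤ (u₁:ℝ)^2 + (u₂:ℝ)^2 := by positivity
    have hv0 : (0:ℝ) ≤ (v₁:ℝ)^2 + (v₂:ℝ)^2 := by positivity
    have hBr0 : (0:ℝ) ≤ Br := le_trans hu0 hu
    -- VW² ≤ (|uv| + |v|²)² ≤ (2Br)² ; key: W ≤ VW²·U ≤ 4Br³ ; W = 4m - U ≥ 4m - Br
    have hUV : ((u₁:ℝ)*v₁ + (u₂:ℝ)*v₂)^2 ≤ Br^2 := by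
      calc ((u₁:ℝ)*v₁ + (u₂:ℝ)*v₂)^2 ≤ ((u₁:ℝ)^2+(u₂:ℝ)^2) * ((v₁:ℝ)^2+(v₂:ℝ)^2) := hcs
        _ ≤ Br * Br := mul_le_mul hu hv hv0 hBr0
        _ = Br^2 := (sq Br).symm
    have hVW2 : ((v₁:ℝ)*w₁ + (v₂:ℝ)*w₂)^2 ≤ 4*Br^2 := by
      rw [hVWR]
      nlinarith [hUV, hv, hv0, hBr0, sq_nonneg (((u₁:ℝ)*v₁ + (u₂:ℝ)*v₂) + ((v₁:ℝ)^2 + (v₂:ℝ)^2))]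
    exact jarnik_num hD1R hWR hu0 hu hVW2 (sq_nonneg _) keyR hBr0 hBig

lemma jarnik (m : ℤ) (P₁ P₂ P₃ : ℤ × ℤ)
    (h1 : P₁.1^2 + P₁.2^2 = m) (h2 : P₂.1^2 + P₂.2^2 = m) (h3 : P₃.1^2 + P₃.2^2 = m)
    (h12 : P₁ ≠ P₂) (h13 : P₁ ≠ P₃) (h23 : P₂ ≠ P₃)
    (Br : ℝ)
    (hu : ((P₂.1 - P₁.1 : ℤ) : ℝ)^2 + ((P₂.2 - P₁.2 : ℤ) : ℝ)^2 ≤ Br)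
    (hv : ((P₃.1 - P₁.1 : ℤ) : ℝ)^2 + ((P₃.2 - P₁.2 : ℤ) : ℝ)^2 ≤ Br)
    (hBig : Br^3 + Br < (m : ℝ)) : False := by
  obtain ⟨x₁, y₁⟩ := P₁
  obtain ⟨x₂, y₂⟩ := P₂
  obtain ⟨x₃, y₃⟩ := P₃
  simp only at h1 h2 h3 hu hv
  simp only [ne_eq, Prod.mk.injEq, not_and] at h12 h13 h23
  refine jarnik_core m (x₂-x₁) (y₂-y₁) (x₃-x₁) (y₃-y₁) (x₁+x₂) (y₁+y₂)
    (by linear_combination h2 - h1)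
    (by linear_combination 2*h1 + 2*h2)
    (by linear_combination h3 - h1)
    (fun ⟨e1, e2⟩ => h12 (by omega) (by omega))
    (fun ⟨e1, e2⟩ => h13 (by omega) (by omega))
    (fun ⟨e1, e2⟩ => h23 (by omega) (by omega))
    Br (by push_cast at hu ⊢; linarith) (by push_cast at hv ⊢; linarith) hBig



noncomputable def sqrtCard (k : ℕ) : ℕ := Nat.card {x : ZMod k // x^2 = -1}

lemma sqrtCard_eq (k : ℕ) [NeZero k] :
    sqrtCard k = (Finset.univ.filter (fun x : ZMod k => x^2 = -1)).card := by
  rw [sqrtCard, Nat.card_eq_fintype_card, Fintype.card_subtype]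

lemma dvd_of_sqrt (q : ℕ) [NeZero q] (x : ZMod q) (hx : x^2 = -1) : q ∣ x.val^2 + 1 := by
  rw [← ZMod.natCast_eq_zero_iff]
  push_cast
  rw [ZMod.natCast_val, ZMod.cast_id, hx]; ring

lemma sqrtCard_odd_prime_pow (p e : ℕ) (hp : p.Prime) (hodd : p ≠ 2) (he : 1 ≤ e) :
    sqrtCard (p^e) ≤ 2 := by
  haveI : NeZero (p^e) := ⟨pow_ne_zero e hp.pos.ne'⟩
  rw [sqrtCard_eq]
  set s := Finset.univ.filter (fun x : ZMod (p^e) => x^2 = -1) with hs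
  rcases s.eq_empty_or_nonempty with h | ⟨x₀, hx₀⟩
  · simp [h]
  · have hx₀' : x₀^2 = -1 := by simpa [hs] using hx₀
    have hsub : s ⊆ {x₀, -x₀} := by
      intro y hy
      have hy' : y^2 = -1 := by simpa [hs] using hy
      have d1 : (p^e : ℕ) ∣ x₀.val^2 + 1 := dvd_of_sqrt _ _ hx₀'
      have d2 : (p^e : ℕ) ∣ y.val^2 + 1 := dvd_of_sqrt _ _ hy'
      set X : ℤ := (x₀.val : ℤ) with hX
      set Y : ℤ := (y.val : ℤ) with hY
      have d1' : ((p:ℤ))^e ∣ X^2 + 1 := by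
        have := Int.natCast_dvd_natCast.mpr d1; push_cast at this; exact this
      have d2' : ((p:ℤ))^e ∣ Y^2 + 1 := by
        have := Int.natCast_dvd_natCast.mpr d2; push_cast at this; exact this
      have hd : ((p:ℤ))^e ∣ (X - Y) * (X + Y) := by
        have := dvd_sub d1' d2'
        rw [show (X - Y) * (X + Y) = X^2 + 1 - (Y^2 + 1) by ring]; exact this
      have hpInt : Prime (p : ℤ) := Nat.prime_iff_prime_int.mp hp
      have hnd : ¬ ((p:ℤ) ∣ (X - Y) ∧ (p:ℤ) ∣ (X + Y)) := by
        rintro ⟨ha, hb⟩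
        have h2x : (p:ℤ) ∣ 2 * X := by
          rw [show 2 * X = (X - Y) + (X + Y) by ring]; exact dvd_add ha hb
        have hpx : (p:ℤ) ∣ X := by
          rcases hpInt.dvd_mul.mp h2x with h | h
          · exfalso
            have h2 : p ∣ 2 := by exact_mod_cast h
            exact hodd ((Nat.prime_dvd_prime_iff_eq hp Nat.prime_two).mp h2)
          · exact h
        have hdp : (p:ℤ) ∣ X^2 + 1 := dvd_trans (dvd_pow_self _ (Nat.one_le_iff_ne_zero.mp he)) d1'
        have hp1 : (p:ℤ) ∣ 1 := by
          have hx2 : (p:ℤ) ∣ X^2 := dvd_pow hpx two_ne_zero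
          have := dvd_sub hdp hx2
          simpa using this
        have := Int.le_of_dvd one_pos hp1
        have := hp.two_le
        omega
      have hq : ((p^e : ℕ) : ℤ) = (p:ℤ)^e := by push_cast; ring
      by_cases hc : (p:ℤ) ∣ (X + Y)
      · have hnc : ¬ (p:ℤ) ∣ (X - Y) := fun h => hnd ⟨h, hc⟩
        have hcop : IsCoprime ((p:ℤ)^e) (X - Y) :=
          ((hpInt.coprime_iff_not_dvd).mpr hnc).pow_left
        have hdvd : ((p:ℤ))^e ∣ (X + Y) := by
          exact hcop.dvd_of_dvd_mul_left (mul_comm (X-Y) (X+Y) ▸ hd)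
        have : y = -x₀ := by
          have h0 : ((X + Y : ℤ) : ZMod (p^e)) = 0 := by
            rw [ZMod.intCast_zmod_eq_zero_iff_dvd, hq]; exact hdvd
          rw [hX, hY] at h0
          push_cast at h0
          rw [ZMod.natCast_val, ZMod.cast_id, ZMod.natCast_val, ZMod.cast_id] at h0
          linear_combination h0
        simp [this]
      · have hcop : IsCoprime ((p:ℤ)^e) (X + Y) :=
          ((hpInt.coprime_iff_not_dvd).mpr hc).pow_left
        have hdvd : ((p:ℤ))^e ∣ (X - Y) := hcop.dvd_of_dvd_mul_right hd
        have : y = x₀ := by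
          have h0 : ((X - Y : ℤ) : ZMod (p^e)) = 0 := by
            rw [ZMod.intCast_zmod_eq_zero_iff_dvd, hq]; exact hdvd
          rw [hX, hY] at h0
          push_cast at h0
          rw [ZMod.natCast_val, ZMod.cast_id, ZMod.natCast_val, ZMod.cast_id] at h0
          linear_combination -h0
        simp [this]
    calc s.card ≤ ({x₀, -x₀} : Finset (ZMod (p^e))).card := Finset.card_le_card hsub
      _ ≤ 2 := (Finset.card_insert_le _ _).trans (by simp)

lemma sqrtCard_two_pow (e : ℕ) (he : 1 ≤ e) : sqrtCard (2^e) ≤ 2 := by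
  haveI : NeZero (2^e) := ⟨pow_ne_zero e two_ne_zero⟩
  rcases eq_or_lt_of_le he with h | h
  · rw [sqrtCard_eq]
    calc (Finset.univ.filter (fun x : ZMod (2^e) => x^2 = -1)).card
        ≤ Finset.univ.card := Finset.card_filter_le _ _
      _ = 2^e := by rw [Finset.card_univ, ZMod.card]
      _ = 2 := by rw [← h]; norm_num
  · -- e ≥ 2: no solutions
    rw [sqrtCard_eq]
    convert Nat.zero_le 2
    rw [Finset.card_eq_zero, Finset.filter_eq_empty_iff]
    intro x _ hx
    have hd : (2^e : ℕ) ∣ x.val^2 + 1 := dvd_of_sqrt _ _ hx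
    have h4 : (4 : ℕ) ∣ x.val^2 + 1 := by
      refine dvd_trans ?_ hd
      have : (4:ℕ) = 2^2 := by norm_num
      rw [this]
      exact pow_dvd_pow 2 h
    rcases Nat.even_or_odd x.val with ⟨k, hk⟩ | ⟨k, hk⟩
    · rw [hk] at h4
      have : (k+k)^2 + 1 = 4*(k*k) + 1 := by ring
      rw [this] at h4
      omega
    · rw [hk] at h4
      have : (2*k+1)^2 + 1 = 4*(k*k+k) + 2 := by ring
      rw [this] at h4
      omega

lemma sqrtCard_mul (m n : ℕ) (hm : 0 < m) (hn : 0 < n) (h : Nat.Coprime m n) :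
    sqrtCard (m * n) = sqrtCard m * sqrtCard n := by
  haveI : NeZero m := ⟨hm.ne'⟩
  haveI : NeZero n := ⟨hn.ne'⟩
  haveI : NeZero (m * n) := ⟨Nat.mul_ne_zero hm.ne' hn.ne'⟩
  have e1 : {x : ZMod (m*n) // x^2 = -1} ≃ {x : ZMod m × ZMod n // x^2 = -1} := by
    refine Equiv.subtypeEquiv (ZMod.chineseRemainder h).toEquiv (fun x => ?_)
    constructor
    · intro hx
      show (ZMod.chineseRemainder h) x ^ 2 = -1
      rw [← map_pow, hx, map_neg, map_one]
    · intro hx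
      have : (ZMod.chineseRemainder h) (x^2) = (ZMod.chineseRemainder h) (-1) := by
        rw [map_pow, map_neg, map_one]; exact hx
      exact (ZMod.chineseRemainder h).injective this
  have e2 : {x : ZMod m × ZMod n // x^2 = -1} ≃ {a : ZMod m // a^2 = -1} × {b : ZMod n // b^2 = -1} := by
    refine (Equiv.subtypeEquiv (Equiv.refl _) (fun x => ?_)).trans
      (Equiv.subtypeProdEquivProd (p := fun a : ZMod m => a^2 = -1) (q := fun b : ZMod n => b^2 = -1))
    simp [Prod.ext_iff, Prod.pow_def]
  rw [sqrtCard, sqrtCard, sqrtCard, Nat.card_congr (e1.trans e2), Nat.card_prod]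

lemma sqrtCard_le (k : ℕ) (hk : 0 < k) : sqrtCard k ≤ k.divisors.card := by
  induction k using Nat.strong_induction_on with
  | _ k ih =>
  rcases eq_or_lt_of_le (show 1 ≤ k from hk) with h1 | h1
  · have hk1 : k = 1 := h1.symm
    subst hk1
    rw [sqrtCard_eq]
    refine le_trans (Finset.card_filter_le _ _) ?_
    simp [Finset.card_univ, ZMod.card]
  · -- k ≥ 2
    have hk0 : k ≠ 0 := hk.ne'
    have hk1 : k ≠ 1 := by omega
    set p := k.minFac with hp_def
    have hp : p.Prime := Nat.minFac_prime hk1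
    set e := k.factorization p with he_def
    have hpd : p ∣ k := Nat.minFac_dvd k
    have he : 1 ≤ e := hp.factorization_pos_of_dvd hk0 hpd
    set k' := k / p^e with hk'_def
    have hsplit : p^e * k' = k := Nat.ordProj_mul_ordCompl_eq_self k p
    have hcop : Nat.Coprime (p^e) k' := Nat.Coprime.pow_left e (Nat.coprime_ordCompl hp hk0)
    have hk'pos : 0 < k' := Nat.ordCompl_pos p hk0
    have hk'lt : k' < k := by
      have h2 : 2 ≤ p^e := by
        calc 2 ≤ p := hp.two_le
        _ = p^1 := (pow_one p).symm
        _ ≤ p^e := Nat.pow_le_pow_right hp.pos he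
      calc k' < p^e * k' := by nlinarith
        _ = k := hsplit
    have hppow : sqrtCard (p^e) ≤ 2 := by
      rcases eq_or_ne p 2 with h2 | h2
      · rw [h2]; exact sqrtCard_two_pow e he
      · exact sqrtCard_odd_prime_pow p e hp h2 he
    have hd_pe : (p^e).divisors.card = e + 1 := by
      rw [Nat.divisors_prime_pow hp]
      simp
    calc sqrtCard k = sqrtCard (p^e) * sqrtCard k' := by
          rw [← hsplit] at *; exact sqrtCard_mul _ _ (Nat.pow_pos (n := e) hp.pos) hk'pos hcop
      _ ≤ 2 * k'.divisors.card := Nat.mul_le_mul hppow (ih k' hk'lt hk'pos)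
      _ ≤ (e+1) * k'.divisors.card := by
          have : 2 ≤ e + 1 := by omega
          exact Nat.mul_le_mul_right _ this
      _ = (p^e).divisors.card * k'.divisors.card := by rw [hd_pe]
      _ = k.divisors.card := by rw [← Nat.Coprime.card_divisors_mul hcop, hsplit]

def reps (m : ℕ) : Finset (ℕ × ℕ) :=
  (Finset.range (m+1) ×ˢ Finset.range (m+1)).filter
    (fun q => 0 < q.1 ∧ 0 < q.2 ∧ q.1^2 + q.2^2 = m)

lemma coprime_of_rep {A B m : ℕ} (hB : 0 < B) (hm : A^2 + B^2 = m)
    (hg : Nat.gcd A B = 1) : Nat.Coprime B m := by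
  by_contra hnc
  obtain ⟨p, hp, hpB, hpm⟩ := Nat.Prime.not_coprime_iff_dvd.mp hnc
  have hpB2 : p ∣ B^2 := dvd_pow hpB two_ne_zero
  have hpA2 : p ∣ A^2 := by
    have hA2 : A^2 = m - B^2 := by rw [← hm, Nat.add_sub_cancel]
    rw [hA2]
    exact Nat.dvd_sub hpm hpB2
  have hpA : p ∣ A := hp.dvd_of_dvd_pow hpA2
  have hp1 : p ∣ 1 := hg ▸ Nat.dvd_gcd hpA hpB
  have hple : p ≤ 1 := Nat.le_of_dvd one_pos hp1
  have := hp.two_le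
  omega

lemma primreps_card_le (m : ℕ) :
    ((reps m).filter (fun q => Nat.gcd q.1 q.2 = 1)).card ≤ m.divisors.card := by
  rcases Nat.lt_or_ge m 2 with hm | hm
  · -- m = 0 or 1 : empty
    have : (reps m).filter (fun q => Nat.gcd q.1 q.2 = 1) = ∅ := by
      rw [Finset.eq_empty_iff_forall_notMem]
      rintro ⟨A, B⟩ hq
      simp only [reps, Finset.mem_filter, Finset.mem_product] at hq
      obtain ⟨⟨_, hA, hB, hsum⟩, hg⟩ := hq
      have h1 : 1 ≤ A^2 := Nat.one_le_pow _ _ hA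
      have h2 : 1 ≤ B^2 := Nat.one_le_pow _ _ hB
      omega
    simp [this]
  · haveI : NeZero m := ⟨by omega⟩
    have key : ((reps m).filter (fun q => Nat.gcd q.1 q.2 = 1)).card ≤
        (Finset.univ.filter (fun x : ZMod m => x^2 = -1)).card := by
      apply Finset.card_le_card_of_injOn
        (fun q => (q.1 : ZMod m) * (q.2 : ZMod m)⁻¹)
      · rintro ⟨A, B⟩ hq
        simp only [Finset.mem_coe, reps, Finset.mem_filter, Finset.mem_product] at hq
        obtain ⟨⟨_, hA, hB, hsum⟩, hg⟩ := hq
        have hBu : IsUnit (B : ZMod m) :=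
          (ZMod.isUnit_iff_coprime B m).mpr (coprime_of_rep hB hsum hg)
        simp only [Finset.mem_coe, Finset.mem_filter, Finset.mem_univ, true_and]
        have hAB : (A : ZMod m)^2 = -(B : ZMod m)^2 := by
          have : ((A^2 + B^2 : ℕ) : ZMod m) = 0 := by rw [hsum, ZMod.natCast_self]
          push_cast at this
          linear_combination this
        have hBB : (B : ZMod m) * (B : ZMod m)⁻¹ = 1 := ZMod.mul_inv_of_unit _ hBu
        calc ((A : ZMod m) * (B : ZMod m)⁻¹)^2 = (A:ZMod m)^2 * ((B:ZMod m)⁻¹)^2 := by ring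
          _ = -(((B : ZMod m) * (B : ZMod m)⁻¹)^2) := by rw [hAB]; ring
          _ = -1 := by rw [hBB]; norm_num
      · rintro ⟨A, B⟩ hq ⟨A', B'⟩ hq' heq
        simp only [reps, Finset.coe_filter, Set.mem_setOf_eq, Finset.mem_filter,
          Finset.mem_product] at hq hq'
        obtain ⟨⟨_, hA, hB, hsum⟩, hg⟩ := hq
        obtain ⟨⟨_, hA', hB', hsum'⟩, hg'⟩ := hq'
        have hBu : IsUnit (B : ZMod m) :=
          (ZMod.isUnit_iff_coprime B m).mpr (coprime_of_rep hB hsum hg)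
        have hBu' : IsUnit (B' : ZMod m) :=
          (ZMod.isUnit_iff_coprime B' m).mpr (coprime_of_rep hB' hsum' hg')
        simp only at heq
        have hABm : (A : ZMod m) * (B' : ZMod m) = (A' : ZMod m) * (B : ZMod m) := by
          have h1 : (A : ZMod m) * (B : ZMod m)⁻¹ * ((B:ZMod m) * (B':ZMod m))
              = (A' : ZMod m) * (B' : ZMod m)⁻¹ * ((B:ZMod m) * (B':ZMod m)) := by rw [heq]
          have hBB : (B : ZMod m) * (B : ZMod m)⁻¹ = 1 := ZMod.mul_inv_of_unit _ hBu
          have hBB' : (B' : ZMod m) * (B' : ZMod m)⁻¹ = 1 := ZMod.mul_inv_of_unit _ hBu'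
          calc (A : ZMod m) * (B' : ZMod m)
              = ((B:ZMod m) * (B:ZMod m)⁻¹) * ((A : ZMod m) * (B' : ZMod m)) := by
                rw [hBB]; ring
            _ = (A : ZMod m) * (B : ZMod m)⁻¹ * ((B:ZMod m) * (B':ZMod m)) := by ring
            _ = (A' : ZMod m) * (B' : ZMod m)⁻¹ * ((B:ZMod m) * (B':ZMod m)) := h1
            _ = ((B':ZMod m) * (B':ZMod m)⁻¹) * ((A' : ZMod m) * (B : ZMod m)) := by ring
            _ = (A' : ZMod m) * (B : ZMod m) := by rw [hBB']; ring
        have hmod : A * B' ≡ A' * B [MOD m] :=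
          (ZMod.natCast_eq_natCast_iff (A*B') (A'*B) m).mp (by push_cast; exact hABm)
        have hdvd : (m : ℤ) ∣ ((A' * B : ℕ) : ℤ) - ((A * B' : ℕ) : ℤ) :=
          (Nat.modEq_iff_dvd.mp hmod)
        set d : ℤ := ((A' * B : ℕ) : ℤ) - ((A * B' : ℕ) : ℤ) with hd
        have hbra : d^2 + ((A:ℤ)*(A':ℤ) + (B:ℤ)*(B':ℤ))^2 = (m:ℤ)^2 := by
          have e1 : ((A:ℤ))^2 + ((B:ℤ))^2 = (m:ℤ) := by exact_mod_cast hsum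
          have e2 : ((A':ℤ))^2 + ((B':ℤ))^2 = (m:ℤ) := by exact_mod_cast hsum'
          rw [hd]; push_cast
          linear_combination ((A':ℤ)^2 + (B':ℤ)^2) * e1 + (m:ℤ) * e2
        have hpos : (1:ℤ) ≤ (A:ℤ)*(A':ℤ) + (B:ℤ)*(B':ℤ) := by
          have e1 : (1:ℤ) ≤ (A:ℤ) := by exact_mod_cast hA
          have e2 : (1:ℤ) ≤ (A':ℤ) := by exact_mod_cast hA'
          have e3 : (1:ℤ) ≤ (B:ℤ) := by exact_mod_cast hB
          have e4 : (1:ℤ) ≤ (B':ℤ) := by exact_mod_cast hB'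
          nlinarith
        have hd0 : d = 0 := by
          by_contra hne
          have habs : (m:ℤ) ≤ |d| := Int.le_of_dvd (abs_pos.mpr hne) ((dvd_abs _ _).mpr hdvd)
          have : (m:ℤ)^2 ≤ d^2 := by
            have hm0 : (0:ℤ) ≤ (m:ℤ) := Int.natCast_nonneg m
            calc (m:ℤ)^2 ≤ |d|^2 := pow_le_pow_left₀ hm0 habs 2
              _ = d^2 := sq_abs d
          nlinarith
        have hABn : A' * B = A * B' := by
          have : ((A' * B : ℕ) : ℤ) = ((A * B' : ℕ) : ℤ) := by omega
          exact_mod_cast this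
        have hcop : Nat.Coprime A B := hg
        have hcop' : Nat.Coprime A' B' := hg'
        have hAA' : A ∣ A' := hcop.dvd_of_dvd_mul_right ⟨B', hABn⟩
        have hA'A : A' ∣ A := hcop'.dvd_of_dvd_mul_right ⟨B, hABn.symm⟩
        have hAeq : A = A' := Nat.dvd_antisymm hAA' hA'A
        have hBeq : B = B' := by
          subst hAeq
          exact Nat.eq_of_mul_eq_mul_left hA hABn
        simp [hAeq, hBeq]
    calc ((reps m).filter (fun q => Nat.gcd q.1 q.2 = 1)).card
        ≤ (Finset.univ.filter (fun x : ZMod m => x^2 = -1)).card := key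
      _ = sqrtCard m := (sqrtCard_eq m).symm
      _ ≤ m.divisors.card := sqrtCard_le m (by omega)

lemma reps_card_le (m : ℕ) (hm : 1 ≤ m) : (reps m).card ≤ m.divisors.card ^ 2 := by
  classical
  have hm0 : m ≠ 0 := by omega
  set t := m.divisors.filter (fun g => g^2 ∣ m) with ht
  have hmem : ∀ q ∈ reps m, Nat.gcd q.1 q.2 ∈ t := by
    rintro ⟨A, B⟩ hq
    simp only [reps, Finset.mem_filter, Finset.mem_product] at hq
    obtain ⟨_, hA, hB, hsum⟩ := hq
    set g := Nat.gcd A B with hg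
    have hgA : g ∣ A := Nat.gcd_dvd_left A B
    have hgB : g ∣ B := Nat.gcd_dvd_right A B
    have hsq : g^2 ∣ m := by
      rw [← hsum]
      exact dvd_add (pow_dvd_pow_of_dvd hgA 2) (pow_dvd_pow_of_dvd hgB 2)
    rw [ht, Finset.mem_filter, Nat.mem_divisors]
    exact ⟨⟨dvd_trans (dvd_pow_self g two_ne_zero) hsq, hm0⟩, hsq⟩
  rw [Finset.card_eq_sum_card_fiberwise hmem]
  have hbound : ∀ g ∈ t, ((reps m).filter (fun q => Nat.gcd q.1 q.2 = g)).card
      ≤ m.divisors.card := by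
    intro g hgt
    rw [ht, Finset.mem_filter, Nat.mem_divisors] at hgt
    obtain ⟨⟨hgm, _⟩, hsq⟩ := hgt
    set k := m / g^2 with hk
    have hkm : k ∣ m := ⟨g^2, (Nat.div_mul_cancel hsq).symm⟩
    have hle1 : ((reps m).filter (fun q => Nat.gcd q.1 q.2 = g)).card
        ≤ ((reps k).filter (fun q => Nat.gcd q.1 q.2 = 1)).card := by
      apply Finset.card_le_card_of_injOn (fun q => (q.1 / g, q.2 / g))
      · rintro ⟨A, B⟩ hq
        simp only [Finset.mem_coe, Finset.mem_filter] at hq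
        obtain ⟨hrep, hgcd⟩ := hq
        simp only [reps, Finset.mem_filter, Finset.mem_product] at hrep
        obtain ⟨_, hA, hB, hsum⟩ := hrep
        have hgpos : 0 < g := by rw [← hgcd]; exact Nat.gcd_pos_of_pos_left B hA
        have hgA : g ∣ A := hgcd ▸ Nat.gcd_dvd_left A B
        have hgB : g ∣ B := hgcd ▸ Nat.gcd_dvd_right A B
        have hA' : A = g * (A / g) := (Nat.mul_div_cancel' hgA).symm
        have hB' : B = g * (B / g) := (Nat.mul_div_cancel' hgB).symm
        have hApos : 0 < A / g := by
          rcases Nat.eq_zero_or_pos (A / g) with h | h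
          · rw [h, Nat.mul_zero] at hA'; omega
          · exact h
        have hBpos : 0 < B / g := by
          rcases Nat.eq_zero_or_pos (B / g) with h | h
          · rw [h, Nat.mul_zero] at hB'; omega
          · exact h
        have hksum : (A/g)^2 + (B/g)^2 = k := by
          have : m = ((A/g)^2 + (B/g)^2) * g^2 := by
            rw [← hsum]; nth_rewrite 1 [hA', hB']; ring
          rw [hk, this, Nat.mul_div_cancel _ (pow_pos hgpos 2)]
        have hcop : Nat.gcd (A/g) (B/g) = 1 := by
          rw [← hgcd]
          exact Nat.coprime_div_gcd_div_gcd (hgcd ▸ hgpos)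
        simp only [Finset.mem_coe, reps, Finset.mem_filter, Finset.mem_product, Finset.mem_range]
        refine ⟨⟨⟨?_, ?_⟩, hApos, hBpos, hksum⟩, hcop⟩
        · have h1 : A/g ≤ (A/g)^2 := Nat.le_self_pow two_ne_zero _
          omega
        · have h1 : B/g ≤ (B/g)^2 := Nat.le_self_pow two_ne_zero _
          omega
      · rintro ⟨A, B⟩ hq ⟨A', B'⟩ hq' heq
        simp only [Finset.coe_filter, Set.mem_setOf_eq] at hq hq'
        obtain ⟨hrep, hgcd⟩ := hq
        obtain ⟨hrep', hgcd'⟩ := hq'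
        simp only [reps, Finset.mem_filter, Finset.mem_product] at hrep hrep'
        have hgA : g ∣ A := hgcd ▸ Nat.gcd_dvd_left A B
        have hgB : g ∣ B := hgcd ▸ Nat.gcd_dvd_right A B
        have hgA' : g ∣ A' := hgcd' ▸ Nat.gcd_dvd_left A' B'
        have hgB' : g ∣ B' := hgcd' ▸ Nat.gcd_dvd_right A' B'
        simp only [Prod.mk.injEq] at heq ⊢
        obtain ⟨e1, e2⟩ := heq
        constructor
        · rw [← Nat.mul_div_cancel' hgA, ← Nat.mul_div_cancel' hgA', e1]
        · rw [← Nat.mul_div_cancel' hgB, ← Nat.mul_div_cancel' hgB', e2]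
    calc ((reps m).filter (fun q => Nat.gcd q.1 q.2 = g)).card
        ≤ ((reps k).filter (fun q => Nat.gcd q.1 q.2 = 1)).card := hle1
      _ ≤ k.divisors.card := primreps_card_le k
      _ ≤ m.divisors.card := Finset.card_le_card (Nat.divisors_subset_of_dvd hm0 hkm)
  calc ∑ g ∈ t, ((reps m).filter (fun q => Nat.gcd q.1 q.2 = g)).card
      ≤ ∑ g ∈ t, m.divisors.card := Finset.sum_le_sum hbound
    _ = t.card * m.divisors.card := by rw [Finset.sum_const, smul_eq_mul]
    _ ≤ m.divisors.card * m.divisors.card := by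
        have : t.card ≤ m.divisors.card := Finset.card_le_card (Finset.filter_subset _ _)
        exact Nat.mul_le_mul_right _ this
    _ = m.divisors.card ^ 2 := (sq _).symm



lemma divisor_bound (n : ℕ) (hn : 16 ≤ n) :
    (n.divisors.card : ℝ) ≤ Real.exp (100 * Real.log n / Real.log (Real.log n)) := by
  have hn0 : n ≠ 0 := by omega
  set L : ℝ := Real.log n with hLdef
  set Q : ℝ := Real.sqrt (Real.sqrt L) with hQdef
  have hn1 : (1:ℝ) ≤ n := by exact_mod_cast Nat.one_le_iff_ne_zero.mpr hn0
  have hL2 : 2 ≤ L := by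
    rw [hLdef, Real.le_log_iff_exp_le (by positivity)]
    have h1 : Real.exp 2 = (Real.exp 1)^2 := by rw [← Real.exp_nat_mul]; norm_num
    have h2 : Real.exp 1 < 2.7182818286 := Real.exp_one_lt_d9
    have h3 : (Real.exp 1)^2 < 2.7182818286^2 := by
      apply pow_lt_pow_left₀ h2 (Real.exp_pos 1).le
      norm_num
    have h4 : (2.7182818286:ℝ)^2 ≤ 16 := by norm_num
    have h5 : (16:ℝ) ≤ (n:ℝ) := by exact_mod_cast hn
    linarith
  have hL0 : 0 < L := by linarith
  have hlogL : 0 < Real.log L := Real.log_pos (by linarith)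
  have hQ0 : 0 < Q := Real.sqrt_pos.mpr (Real.sqrt_pos.mpr hL0)
  have hQ1 : 1 ≤ Q := by
    rw [hQdef]
    rw [show (1:ℝ) = Real.sqrt (Real.sqrt 1) by simp]
    apply Real.sqrt_le_sqrt
    apply Real.sqrt_le_sqrt
    linarith
  have hQ4 : Q^4 = L := by
    rw [hQdef]
    rw [show Q^4 = (Q^2)^2 by ring, hQdef]
    rw [Real.sq_sqrt (Real.sqrt_nonneg L), Real.sq_sqrt hL0.le]
  have hsq : Real.sqrt L = Q^2 := by
    rw [hQdef, Real.sq_sqrt (Real.sqrt_nonneg L)]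
  have hlogL4Q : Real.log L ≤ 4 * Q := by
    have h1 : Real.log Q ≤ Q - 1 := Real.log_le_sub_one_of_pos hQ0
    have h2 : Real.log L = 4 * Real.log Q := by
      rw [← hQ4, Real.log_pow]; push_cast; ring
    linarith
  have hlog2L : Real.log (2*L) ≤ 5 * Q := by
    have h1 : Real.log (2*L) = Real.log 2 + Real.log L := Real.log_mul two_ne_zero hL0.ne'
    have h2 : Real.log 2 < 0.6931471808 := Real.log_two_lt_d9
    linarith
  -- prime factorization setup
  set f := n.factorization with hf
  set P := n.primeFactors with hP
  have hlogsum : ∑ p ∈ P, (f p : ℝ) * Real.log p = L := by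
    have h1 : n.factorization.prod (· ^ ·) = n := Nat.factorization_prod_pow_eq_self hn0
    have h1' : ∏ p ∈ P, p^(f p) = n := by
      rw [hP, ← Nat.support_factorization]
      exact h1
    have h2 : (n:ℝ) = ∏ p ∈ P, (p:ℝ)^(f p) := by
      calc (n:ℝ) = ((∏ p ∈ P, p^(f p) : ℕ) : ℝ) := by rw [h1']
        _ = ∏ p ∈ P, (p:ℝ)^(f p) := by push_cast; rfl
    rw [hLdef, h2, Real.log_prod]
    · apply Finset.sum_congr rfl
      intro p hp
      rw [Real.log_pow]
    · intro p hp
      have hpp : p.Prime := Nat.prime_of_mem_primeFactors (hP ▸ hp)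
      have hp0 : (0:ℝ) < (p:ℝ) := by exact_mod_cast hpp.pos
      positivity
  have hterm_nonneg : ∀ p ∈ P, 0 ≤ (f p : ℝ) * Real.log p := by
    intro p hp
    have hpp : p.Prime := Nat.prime_of_mem_primeFactors (hP ▸ hp)
    have : (1:ℝ) ≤ p := by exact_mod_cast hpp.one_lt.le
    have := Real.log_nonneg this
    positivity
  -- individual exponent bound : (f p + 1) ≤ 2L for p ∈ P
  have hexp_bound : ∀ p ∈ P, ((f p : ℝ) + 1) ≤ 2 * L := by
    intro p hp
    have hpp : p.Prime := Nat.prime_of_mem_primeFactors (hP ▸ hp)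
    have hdvd : p ^ (f p) ∣ n := Nat.ordProj_dvd n p
    have hle : (2:ℕ) ^ (f p) ≤ n := by
      calc (2:ℕ)^(f p) ≤ p^(f p) := Nat.pow_le_pow_left hpp.two_le _
        _ ≤ n := Nat.le_of_dvd (by omega) hdvd
    have hle' : ((f p : ℝ)) * Real.log 2 ≤ L := by
      have h1 : ((2:ℝ))^(f p) ≤ (n:ℝ) := by exact_mod_cast hle
      have h2 := Real.log_le_log (by positivity) h1
      rwa [Real.log_pow] at h2
    have h2 : (0.6931471803:ℝ) < Real.log 2 := Real.log_two_gt_d9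
    have h3 : (0:ℝ) ≤ (f p : ℝ) := by positivity
    nlinarith
  set t : ℝ := Real.sqrt L with ht
  set P₁ := P.filter (fun p : ℕ => (p:ℝ) ≤ t) with hP₁
  set P₂ := P.filter (fun p : ℕ => ¬ ((p:ℝ) ≤ t)) with hP₂
  have hcard : (n.divisors.card : ℝ) = ∏ p ∈ P, ((f p : ℝ) + 1) := by
    rw [Nat.card_divisors hn0]
    push_cast
    rfl
  have hsplit : ∏ p ∈ P, ((f p : ℝ) + 1) = (∏ p ∈ P₁, ((f p : ℝ) + 1)) * ∏ p ∈ P₂, ((f p : ℝ) + 1) := by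
    rw [hP₁, hP₂, Finset.prod_filter_mul_prod_filter_not]
  -- bound on P₁
  have hcard1 : (P₁.card : ℝ) ≤ t := by
    have hsub : P₁ ⊆ Finset.Icc 2 ⌊t⌋₊ := by
      intro p hp
      rw [hP₁, Finset.mem_filter] at hp
      obtain ⟨hp1, hp2⟩ := hp
      have hpp : p.Prime := Nat.prime_of_mem_primeFactors (hP ▸ hp1)
      rw [Finset.mem_Icc]
      exact ⟨hpp.two_le, Nat.le_floor hp2⟩
    have h1 : P₁.card ≤ ⌊t⌋₊ - 1 := by
      calc P₁.card ≤ (Finset.Icc 2 ⌊t⌋₊).card := Finset.card_le_card hsub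
        _ = ⌊t⌋₊ - 1 := by rw [Nat.card_Icc]; omega
    have h2 : ((⌊t⌋₊ - 1 : ℕ) : ℝ) ≤ t := by
      have h3 : (⌊t⌋₊ : ℝ) ≤ t := Nat.floor_le (Real.sqrt_nonneg L)
      have h4 : ((⌊t⌋₊ - 1 : ℕ) : ℝ) ≤ (⌊t⌋₊ : ℝ) := by
        exact_mod_cast Nat.sub_le _ _
      linarith
    calc (P₁.card : ℝ) ≤ ((⌊t⌋₊ - 1 : ℕ) : ℝ) := by exact_mod_cast h1
      _ ≤ t := h2
  have hprod1 : ∏ p ∈ P₁, ((f p : ℝ) + 1) ≤ Real.exp (t * Real.log (2*L)) := by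
    have h2L1 : (1:ℝ) ≤ 2*L := by linarith
    have h1 : ∏ p ∈ P₁, ((f p : ℝ) + 1) ≤ (2*L)^(P₁.card) := by
      rw [← Finset.prod_const]
      apply Finset.prod_le_prod
      · intro p hp; positivity
      · intro p hp
        exact hexp_bound p (Finset.mem_of_mem_filter p hp)
    have h2 : ((2*L):ℝ)^(P₁.card) = (2*L) ^ ((P₁.card : ℝ) : ℝ) := by
      rw [Real.rpow_natCast]
    have h3 : (2*L) ^ ((P₁.card : ℝ)) ≤ (2*L) ^ t :=
      Real.rpow_le_rpow_of_exponent_le h2L1 hcard1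
    have h4 : (2*L) ^ t = Real.exp (t * Real.log (2*L)) := by
      rw [Real.rpow_def_of_pos (by linarith), mul_comm]
    calc ∏ p ∈ P₁, ((f p : ℝ) + 1) ≤ ((2*L):ℝ)^(P₁.card) := h1
      _ = (2*L) ^ ((P₁.card : ℝ)) := h2
      _ ≤ (2*L) ^ t := h3
      _ = Real.exp (t * Real.log (2*L)) := h4
  -- bound on P₂
  set E : ℕ := ∑ p ∈ P₂, f p with hE
  have hEbound : (E : ℝ) * (Real.log L / 2) ≤ L := by
    have h1 : ∀ p ∈ P₂, Real.log L / 2 ≤ Real.log p := by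
      intro p hp
      rw [hP₂, Finset.mem_filter] at hp
      obtain ⟨hp1, hp2⟩ := hp
      push_neg at hp2
      have ht0 : 0 < t := Real.sqrt_pos.mpr hL0
      have h3 : Real.log t ≤ Real.log p := Real.log_le_log ht0 hp2.le
      rw [ht, Real.log_sqrt hL0.le] at h3
      exact h3
    have h2 : (E:ℝ) * (Real.log L / 2) = ∑ p ∈ P₂, (f p : ℝ) * (Real.log L / 2) := by
      rw [hE]; push_cast; rw [Finset.sum_mul]
    rw [h2]
    have h3 : ∑ p ∈ P₂, (f p : ℝ) * (Real.log L / 2) ≤ ∑ p ∈ P₂, (f p : ℝ) * Real.log p := by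
      apply Finset.sum_le_sum
      intro p hp
      exact mul_le_mul_of_nonneg_left (h1 p hp) (by positivity)
    have h4 : ∑ p ∈ P₂, (f p : ℝ) * Real.log p ≤ ∑ p ∈ P, (f p : ℝ) * Real.log p := by
      apply Finset.sum_le_sum_of_subset_of_nonneg (Finset.filter_subset _ _)
      intro p hp _
      exact hterm_nonneg p hp
    linarith [hlogsum ▸ le_refl L]
  have hprod2 : ∏ p ∈ P₂, ((f p : ℝ) + 1) ≤ Real.exp ((2 * L / Real.log L) * Real.log 2) := by
    have h1 : ∏ p ∈ P₂, (f p + 1) ≤ 2^E := by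
      calc ∏ p ∈ P₂, (f p + 1) ≤ ∏ p ∈ P₂, 2^(f p) := by
            apply Finset.prod_le_prod'
            intro p hp
            exact Nat.lt_two_pow_self
        _ = 2^E := by rw [hE, ← Finset.prod_pow_eq_pow_sum]
    have h2 : ((2:ℝ))^(E:ℕ) = Real.exp ((E:ℝ) * Real.log 2) := by
      rw [← Real.rpow_natCast 2 E, Real.rpow_def_of_pos (by norm_num), mul_comm]
    have hE2 : (E : ℝ) ≤ 2 * L / Real.log L := by
      rw [le_div_iff₀ hlogL]
      nlinarith
    calc ∏ p ∈ P₂, ((f p : ℝ) + 1) ≤ ((2:ℝ))^(E:ℕ) := by exact_mod_cast h1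
      _ = Real.exp ((E:ℝ) * Real.log 2) := h2
      _ ≤ Real.exp ((2 * L / Real.log L) * Real.log 2) := by
          apply Real.exp_le_exp.mpr
          apply mul_le_mul_of_nonneg_right hE2 (Real.log_nonneg (by norm_num))
  -- combine
  have hfinal : t * Real.log (2*L) + (2 * L / Real.log L) * Real.log 2 ≤ 100 * L / Real.log L := by
    have h2 : Real.log 2 < 0.6931471808 := Real.log_two_lt_d9
    have h2' : 0 < Real.log 2 := Real.log_pos (by norm_num)
    have ht5 : t * Real.log (2*L) * Real.log L ≤ 20 * L := by
      have hta : t = Q^2 := hsq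
      have hlog2L0 : 0 ≤ Real.log (2*L) := Real.log_nonneg (by linarith)
      calc t * Real.log (2*L) * Real.log L ≤ Q^2 * (5*Q) * (4*Q) := by
            rw [hta]
            apply mul_le_mul
            · apply mul_le_mul_of_nonneg_left hlog2L (by positivity)
            · exact hlogL4Q
            · exact hlogL.le
            · positivity
        _ = 20 * Q^4 := by ring
        _ = 20 * L := by rw [hQ4]
    have ht6 : t * Real.log (2*L) ≤ 20 * L / Real.log L := by
      rw [le_div_iff₀ hlogL]
      linarith
    have ht7 : (2 * L / Real.log L) * Real.log 2 ≤ 1.4 * L / Real.log L := by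
      rw [div_mul_eq_mul_div, div_le_div_iff₀ hlogL hlogL]
      have ha : 2 * L * Real.log 2 ≤ 1.4 * L := by nlinarith
      exact mul_le_mul_of_nonneg_right ha hlogL.le
    have hLlog : 0 ≤ L / Real.log L := by positivity
    have : 20 * L / Real.log L + 1.4 * L / Real.log L ≤ 100 * L / Real.log L := by
      rw [← add_div, div_le_div_iff₀ hlogL hlogL]
      exact mul_le_mul_of_nonneg_right (by linarith) hlogL.le
    linarith
  calc (n.divisors.card : ℝ) = ∏ p ∈ P, ((f p : ℝ) + 1) := hcard
    _ = (∏ p ∈ P₁, ((f p : ℝ) + 1)) * ∏ p ∈ P₂, ((f p : ℝ) + 1) := hsplit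
    _ ≤ Real.exp (t * Real.log (2*L)) * Real.exp ((2 * L / Real.log L) * Real.log 2) := by
        apply mul_le_mul hprod1 hprod2
        · positivity
        · positivity
    _ = Real.exp (t * Real.log (2*L) + (2 * L / Real.log L) * Real.log 2) := (Real.exp_add _ _).symm
    _ ≤ Real.exp (100 * L / Real.log L) := Real.exp_le_exp.mpr hfinal
    _ = Real.exp (100 * Real.log n / Real.log (Real.log n)) := by rw [hLdef]



lemma two_le_log {x : ℝ} (hx : 16 ≤ x) : 2 ≤ Real.log x := by
  rw [Real.le_log_iff_exp_le (by linarith)]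
  have h1 : Real.exp 2 = (Real.exp 1)^2 := by rw [← Real.exp_nat_mul]; norm_num
  have h2 : Real.exp 1 < 2.7182818286 := Real.exp_one_lt_d9
  have h3 : (Real.exp 1)^2 < 2.7182818286^2 :=
    pow_lt_pow_left₀ h2 (Real.exp_pos 1).le two_ne_zero
  have h4 : (2.7182818286:ℝ)^2 ≤ 16 := by norm_num
  linarith

lemma log_ratio (m : ℕ) (R : ℝ) (hm : 18 ≤ m) (hR : 3 ≤ R) (hle : (m:ℝ) ≤ 65536*R^6) :
    Real.log m / Real.log (Real.log m) ≤ 40 * Real.log R / Real.log (Real.log R) := by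
  have hm18 : (18:ℝ) ≤ (m:ℝ) := by exact_mod_cast hm
  set lam := Real.log (m:ℝ) with hlam
  set Lam := Real.log R with hLam
  have hlam2 : (2:ℝ) ≤ lam := two_le_log (by linarith)
  have hLam1 : 1 < Lam := by
    rw [hLam, ← Real.log_exp 1]
    apply Real.log_lt_log (Real.exp_pos 1)
    have := Real.exp_one_lt_d9
    linarith
  have hLam0 : 0 < Lam := by linarith
  have hloglam : (1/2 : ℝ) ≤ Real.log lam := by
    have h1 : Real.log 2 ≤ Real.log lam := Real.log_le_log (by norm_num) hlam2
    have h2 : (0.6931471803:ℝ) < Real.log 2 := Real.log_two_gt_d9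
    linarith
  have hloglam0 : 0 < Real.log lam := by linarith
  have hlogLam0 : 0 < Real.log Lam := Real.log_pos hLam1
  have hlamle : lam ≤ 18 * Lam := by
    have h1 : lam ≤ Real.log (65536*R^6) := by
      rw [hlam]
      apply Real.log_le_log (by linarith) hle
    have h2 : Real.log (65536*R^6) = Real.log 65536 + 6 * Lam := by
      rw [Real.log_mul (by norm_num) (by positivity), Real.log_pow, hLam]
      push_cast; ring
    have h3 : Real.log 65536 = 16 * Real.log 2 := by
      rw [show (65536:ℝ) = 2^16 by norm_num, Real.log_pow]
      push_cast; ring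
    have h4 : Real.log 2 < 0.6931471808 := Real.log_two_lt_d9
    nlinarith
  rw [div_le_div_iff₀ hloglam0 hlogLam0]
  by_cases hcase : lam^2 ≤ Lam
  · have hsqrt : lam ≤ Real.sqrt Lam := by
      rw [show lam = Real.sqrt (lam^2) by rw [Real.sqrt_sq (by linarith)]]
      exact Real.sqrt_le_sqrt hcase
    have hlogLam2 : Real.log Lam ≤ 2 * Real.sqrt Lam := by
      have h1 : Real.log Lam = 2 * Real.log (Real.sqrt Lam) := by
        rw [Real.log_sqrt hLam0.le]; ring
      have h2 : Real.log (Real.sqrt Lam) ≤ Real.sqrt Lam - 1 :=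
        Real.log_le_sub_one_of_pos (Real.sqrt_pos.mpr hLam0)
      linarith
    have hsq : (Real.sqrt Lam)^2 = Lam := Real.sq_sqrt hLam0.le
    have h1 : lam * Real.log Lam ≤ 2 * Lam := by
      nlinarith [Real.sqrt_nonneg Lam, hlogLam0]
    nlinarith
  · push_neg at hcase
    have hlogc : Real.log Lam ≤ 2 * Real.log lam := by
      have h1 : Real.log Lam ≤ Real.log (lam^2) := Real.log_le_log hLam0 hcase.le
      rwa [Real.log_pow, show ((2:ℕ):ℝ) = 2 by norm_num] at h1
    nlinarith



set_option maxHeartbeats 2000000 in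
/-- Lemma 2.2: for frequencies `z_n` satisfying the radial Dirichlet eigenvalue
asymptotics on the disc, the number of pairs `(n₁, n₂)` of positive integers lying in a
box of size `R₁` with `|z_{n₁}² + z_{n₂}² − ℓ| < 1` is at most
`C · exp(c · log R₁ / log log R₁)`. -/
theorem pair_count_in_box_bound (C₁ : ℝ) (hC₁ : 0 < C₁) (z : ℕ → ℝ)
    (hz : ∀ n : ℕ, 1 ≤ n → |z n - π * (n - 1 / 4)| ≤ C₁ / n) :
    ∃ c > (0 : ℝ), ∃ C > (0 : ℝ), ∀ ℓ : ℝ, ∀ R₁ : ℝ, R₁ ≥ 3 → ∀ a b : ℝ,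
      (({p : ℕ × ℕ | 1 ≤ p.1 ∧ 1 ≤ p.2 ∧
          (p.1 : ℝ) ∈ Set.Icc a (a + R₁) ∧ (p.2 : ℝ) ∈ Set.Icc b (b + R₁) ∧
          |z p.1 ^ 2 + z p.2 ^ 2 - ℓ| < 1}).ncard : ℝ)
        ≤ C * Real.exp (c * Real.log R₁ / Real.log (Real.log R₁)) := by
  have hπ := Real.pi_pos
  set D : ℝ := 2*π*C₁ + C₁^2 with hD
  have hD0 : 0 < D := by nlinarith
  refine ⟨8000, by norm_num, 3*(32*(1+2*D)/π^2 + 1), by positivity, ?_⟩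
  intro ℓ R₁ hR₁ a b
  -- basic log facts
  have hlogR : 1 < Real.log R₁ := by
    rw [← Real.log_exp 1]
    apply Real.log_lt_log (Real.exp_pos 1)
    have := Real.exp_one_lt_d9
    linarith
  have hloglogR : 0 < Real.log (Real.log R₁) := Real.log_pos hlogR
  set Eexp : ℝ := Real.exp (8000 * Real.log R₁ / Real.log (Real.log R₁)) with hEexp
  have hE1 : 1 ≤ Eexp := by
    rw [hEexp, ← Real.exp_zero]
    apply Real.exp_le_exp.mpr
    positivity
  -- the set and its finiteness
  set S : Set (ℕ × ℕ) := {p : ℕ × ℕ | 1 ≤ p.1 ∧ 1 ≤ p.2 ∧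
      (p.1 : ℝ) ∈ Set.Icc a (a + R₁) ∧ (p.2 : ℝ) ∈ Set.Icc b (b + R₁) ∧
      |z p.1 ^ 2 + z p.2 ^ 2 - ℓ| < 1} with hS
  have hSfin : S.Finite := by
    apply Set.Finite.subset
      ((Finset.range (⌊a+R₁⌋₊+1) ×ˢ Finset.range (⌊b+R₁⌋₊+1)).finite_toSet)
    rintro ⟨n₁, n₂⟩ ⟨h1, h2, ⟨ha1, ha2⟩, ⟨hb1, hb2⟩, habs⟩
    simp only [Finset.coe_product, Set.mem_prod, Finset.mem_coe, Finset.mem_range]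
    exact ⟨Nat.lt_succ_of_le (Nat.le_floor ha2), Nat.lt_succ_of_le (Nat.le_floor hb2)⟩
  rw [Set.ncard_eq_toFinset_card S hSfin]
  set Fs : Finset (ℕ × ℕ) := hSfin.toFinset with hFs
  -- eigenvalue square estimate
  have hzsq : ∀ n : ℕ, 1 ≤ n → |z n ^ 2 - π^2*((n:ℝ)-1/4)^2| ≤ D := by
    intro n hn
    have hn1 : (1:ℝ) ≤ (n:ℝ) := by exact_mod_cast hn
    have hn0 : (n:ℝ) ≠ 0 := by linarith
    have h1 := hz n hn
    have hCn : C₁/(n:ℝ) ≤ C₁ := div_le_self hC₁.le hn1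
    have hCn0 : 0 ≤ C₁/(n:ℝ) := by positivity
    set w : ℝ := π*((n:ℝ)-1/4) with hw
    have hw0 : 0 ≤ w := by rw [hw]; nlinarith
    have key : |z n ^ 2 - π^2*((n:ℝ)-1/4)^2| = |z n - w| * |z n + w| := by
      rw [← abs_mul]
      congr 1
      rw [hw]; ring
    have h2 : |z n + w| ≤ C₁/(n:ℝ) + 2*w := by
      have h3 : |z n + w| ≤ |z n - w| + |2*w| := by
        calc |z n + w| = |(z n - w) + 2*w| := by congr 1; ring
          _ ≤ |z n - w| + |2*w| := abs_add_le _ _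
      rw [abs_of_nonneg (by linarith : (0:ℝ) ≤ 2*w)] at h3
      linarith
    have h4 : |z n ^ 2 - π^2*((n:ℝ)-1/4)^2| ≤ (C₁/(n:ℝ)) * (C₁/(n:ℝ) + 2*w) := by
      rw [key]
      exact mul_le_mul h1 h2 (abs_nonneg _) hCn0
    have h5 : (C₁/(n:ℝ)) * (n:ℝ) = C₁ := div_mul_cancel₀ _ hn0
    have h6 : (C₁/(n:ℝ)) * (C₁/(n:ℝ) + 2*w) ≤ D := by
      rw [hD, hw]
      nlinarith [hCn0, hCn, hπ, hn1, h5]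
    linarith
  -- the integer invariant
  set F : ℕ × ℕ → ℤ := fun p => (4*(p.1:ℤ) - 1)^2 + (4*(p.2:ℤ) - 1)^2 with hF
  set lo : ℝ := 16*(ℓ-1-2*D)/π^2 with hlo
  set hi : ℝ := 16*(ℓ+1+2*D)/π^2 with hhi
  have hwin : ∀ p : ℕ × ℕ, p ∈ S → lo < (F p : ℝ) ∧ (F p : ℝ) < hi := by
    rintro ⟨n₁, n₂⟩ ⟨h1, h2, _, _, habs⟩
    have e1 := hzsq n₁ h1
    have e2 := hzsq n₂ h2
    set Sg : ℝ := ((n₁:ℝ)-1/4)^2 + ((n₂:ℝ)-1/4)^2 with hSg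
    have hmid : |π^2*Sg - ℓ| < 1 + 2*D := by
      rw [hSg]
      have t1 : π^2*(((n₁:ℝ)-1/4)^2 + ((n₂:ℝ)-1/4)^2) - ℓ
          = (z n₁ ^2 + z n₂ ^2 - ℓ) - (z n₁ ^2 - π^2*((n₁:ℝ)-1/4)^2)
            - (z n₂ ^2 - π^2*((n₂:ℝ)-1/4)^2) := by ring
      rw [t1]
      calc |(z n₁ ^2 + z n₂ ^2 - ℓ) - (z n₁ ^2 - π^2*((n₁:ℝ)-1/4)^2)
            - (z n₂ ^2 - π^2*((n₂:ℝ)-1/4)^2)|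
          ≤ |(z n₁ ^2 + z n₂ ^2 - ℓ) - (z n₁ ^2 - π^2*((n₁:ℝ)-1/4)^2)|
            + |z n₂ ^2 - π^2*((n₂:ℝ)-1/4)^2| := abs_sub _ _
        _ ≤ |z n₁ ^2 + z n₂ ^2 - ℓ| + |z n₁ ^2 - π^2*((n₁:ℝ)-1/4)^2|
            + |z n₂ ^2 - π^2*((n₂:ℝ)-1/4)^2| := by
              have := abs_sub (z n₁ ^2 + z n₂ ^2 - ℓ) (z n₁ ^2 - π^2*((n₁:ℝ)-1/4)^2)
              linarith
        _ < 1 + 2*D := by linarith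
    have hFcast : ((F (n₁, n₂)) : ℝ) = 16 * Sg := by
      rw [hF, hSg]
      push_cast
      ring
    have habs1 : π^2*Sg - ℓ < 1 + 2*D := (abs_lt.mp hmid).2
    have habs2 : -(1+2*D) < π^2*Sg - ℓ := (abs_lt.mp hmid).1
    constructor
    · rw [hlo, hFcast, div_lt_iff₀ (by positivity : (0:ℝ) < π^2)]
      nlinarith
    · rw [hhi, hFcast, lt_div_iff₀ (by positivity : (0:ℝ) < π^2)]
      nlinarith
  set J : Finset ℤ := Finset.Icc ⌈lo⌉ ⌊hi⌋ with hJ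
  have hFmem : ∀ p ∈ Fs, F p ∈ J := by
    intro p hp
    rw [hFs, Set.Finite.mem_toFinset] at hp
    obtain ⟨hl, hr⟩ := hwin p hp
    rw [hJ, Finset.mem_Icc]
    exact ⟨Int.ceil_le.mpr hl.le, Int.le_floor.mpr hr.le⟩
  have hJcard : (J.card : ℝ) ≤ 32*(1+2*D)/π^2 + 1 := by
    have hwidth : hi - lo = 32*(1+2*D)/π^2 := by
      rw [hhi, hlo]
      field_simp
      ring
    rw [hJ, Int.card_Icc]
    rcases le_or_gt (⌊hi⌋ + 1 - ⌈lo⌉) 0 with h | h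
    · rw [Int.toNat_of_nonpos h]
      simp only [Nat.cast_zero]
      positivity
    · have e : ((⌊hi⌋ + 1 - ⌈lo⌉).toNat : ℤ) = ⌊hi⌋ + 1 - ⌈lo⌉ := Int.toNat_of_nonneg h.le
      have e2 : ((⌊hi⌋ + 1 - ⌈lo⌉).toNat : ℝ) = ((⌊hi⌋:ℝ) + 1 - (⌈lo⌉:ℝ)) := by
        exact_mod_cast e
      rw [e2]
      have h1 : (⌊hi⌋:ℝ) ≤ hi := Int.floor_le hi
      have h2 : lo ≤ (⌈lo⌉:ℝ) := Int.le_ceil lo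
      linarith
  -- fiberwise count
  rw [Finset.card_eq_sum_card_fiberwise hFmem]
  -- per-fiber bound
  have hfiber : ∀ j ∈ J, ((Fs.filter (fun p => F p = j)).card : ℝ) ≤ 2 + Eexp := by
    intro j _
    set fib := Fs.filter (fun p => F p = j) with hfib
    rcases fib.eq_empty_or_nonempty with hemp | ⟨q₀, hq₀⟩
    · rw [hemp]
      simp
      linarith
    · -- facts about members
      have hmem : ∀ p ∈ fib, p ∈ S ∧ F p = j := by
        intro p hp
        rw [hfib, Finset.mem_filter, hFs, Set.Finite.mem_toFinset] at hp
        exact hp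
      have hj18 : (18:ℤ) ≤ j := by
        obtain ⟨hq₀S, hq₀F⟩ := hmem q₀ hq₀
        obtain ⟨h1, h2, _, _, _⟩ := hq₀S
        have hFq : F q₀ = (4*(q₀.1:ℤ) - 1)^2 + (4*(q₀.2:ℤ) - 1)^2 := rfl
        rw [← hq₀F, hFq]
        have e1 : (1:ℤ) ≤ (q₀.1:ℤ) := by exact_mod_cast h1
        have e2 : (1:ℤ) ≤ (q₀.2:ℤ) := by exact_mod_cast h2
        nlinarith
      by_cases hbig : 65536*R₁^6 < (j:ℝ)
      · -- Jarník case : at most 2 points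
        have hcard2 : fib.card ≤ 2 := by
          by_contra hc
          push_neg at hc
          obtain ⟨p, hp, q, hq, r, hr, hpq, hpr, hqr⟩ := Finset.two_lt_card.mp hc
          obtain ⟨hpS, hpF⟩ := hmem p hp
          obtain ⟨hqS, hqF⟩ := hmem q hq
          obtain ⟨hrS, hrF⟩ := hmem r hr
          set φ : ℕ × ℕ → ℤ × ℤ := fun p => ((4*(p.1:ℤ) - 1), (4*(p.2:ℤ) - 1)) with hφ
          have hφinj : ∀ x y : ℕ × ℕ, φ x = φ y → x = y := by
            rintro ⟨x1, x2⟩ ⟨y1, y2⟩ hxy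
            rw [hφ, Prod.mk.injEq] at hxy
            obtain ⟨hx1, hx2⟩ := hxy
            rw [Prod.mk.injEq]
            omega
          have honc : ∀ x : ℕ × ℕ, x ∈ fib → (φ x).1^2 + (φ x).2^2 = j := by
            intro x hx
            obtain ⟨_, hxF⟩ := hmem x hx
            rw [← hxF]
          have hdist : ∀ x y : ℕ × ℕ, x ∈ fib → y ∈ fib → x ≠ y →
              ((φ y).1 - (φ x).1 : ℝ)^2 + ((φ y).2 - (φ x).2 : ℝ)^2 ≤ 32*R₁^2 := by
            intro x y hx hy _
            obtain ⟨hxS, _⟩ := hmem x hx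
            obtain ⟨hyS, _⟩ := hmem y hy
            obtain ⟨_, _, ⟨hxa1, hxa2⟩, ⟨hxb1, hxb2⟩, _⟩ := hxS
            obtain ⟨_, _, ⟨hya1, hya2⟩, ⟨hyb1, hyb2⟩, _⟩ := hyS
            rw [hφ]
            have e1 : (((4*(y.1:ℤ) - 1) - (4*(x.1:ℤ) - 1) : ℤ):ℝ) = 4*((y.1:ℝ) - (x.1:ℝ)) := by
              push_cast; ring
            have e2 : (((4*(y.2:ℤ) - 1) - (4*(x.2:ℤ) - 1) : ℤ):ℝ) = 4*((y.2:ℝ) - (x.2:ℝ)) := by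
              push_cast; ring
            simp only
            push_cast
            nlinarith [hxa1, hxa2, hya1, hya2, hxb1, hxb2, hyb1, hyb2]
          exact jarnik j (φ p) (φ q) (φ r) (honc p hp) (honc q hq) (honc r hr)
            (fun h => hpq (hφinj _ _ h)) (fun h => hpr (hφinj _ _ h)) (fun h => hqr (hφinj _ _ h))
            (32*R₁^2)
            (by
              have := hdist p q hp hq hpq
              push_cast at this ⊢
              linarith)
            (by
              have := hdist p r hp hr hpr
              push_cast at this ⊢
              linarith)
            (by
              have h9 : (9:ℝ) ≤ R₁^2 := by nlinarith
              have h81 : (81:ℝ) ≤ R₁^4 := by nlinarith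
              have hcube : (32*R₁^2)^3 = 32768*(R₁^2*R₁^4) := by ring
              have h6 : 81*R₁^2 ≤ R₁^2*R₁^4 := by nlinarith [sq_nonneg R₁]
              have hR6 : R₁^6 = R₁^2*R₁^4 := by ring
              rw [hR6] at hbig
              nlinarith [hbig])
        calc (fib.card : ℝ) ≤ 2 := by exact_mod_cast hcard2
          _ ≤ 2 + Eexp := by linarith
      · -- divisor bound case
        push_neg at hbig
        set m : ℕ := j.toNat with hm
        have hmj : (m:ℤ) = j := Int.toNat_of_nonneg (by omega)
        have hm18 : 18 ≤ m := by omega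
        have hinj : fib.card ≤ (reps m).card := by
          apply Finset.card_le_card_of_injOn (fun p => (4*p.1 - 1, 4*p.2 - 1))
          · intro p hp
            obtain ⟨hpS, hpF⟩ := hmem p hp
            obtain ⟨h1, h2, _, _, _⟩ := hpS
            have hsum : (4*p.1 - 1)^2 + (4*p.2 - 1)^2 = m := by
              have e0 : ((4*p.1 - 1 : ℕ) : ℤ) = 4*(p.1:ℤ) - 1 := by omega
              have e0' : ((4*p.2 - 1 : ℕ) : ℤ) = 4*(p.2:ℤ) - 1 := by omega
              have hFp : (4*(p.1:ℤ)-1)^2 + (4*(p.2:ℤ)-1)^2 = (m:ℤ) := by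
                rw [hmj, ← hpF]
              have : (((4*p.1 - 1)^2 + (4*p.2 - 1)^2 : ℕ) : ℤ) = (m:ℤ) := by
                push_cast [e0, e0']
                linear_combination hFp
              exact_mod_cast this
            simp only [Finset.mem_coe, reps, Finset.mem_filter, Finset.mem_product, Finset.mem_range]
            have hA1 : 1 ≤ 4*p.1 - 1 := by omega
            have hB1 : 1 ≤ 4*p.2 - 1 := by omega
            have hA2 : (4*p.1-1) ≤ (4*p.1-1)^2 := Nat.le_self_pow two_ne_zero _
            have hB2 : (4*p.2-1) ≤ (4*p.2-1)^2 := Nat.le_self_pow two_ne_zero _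
            refine ⟨⟨?_, ?_⟩, by omega, by omega, hsum⟩ <;> omega
          · rintro ⟨x1, x2⟩ hx ⟨y1, y2⟩ hy hxy
            obtain ⟨hxS, _⟩ := hmem _ (by simpa using hx)
            obtain ⟨hyS, _⟩ := hmem _ (by simpa using hy)
            obtain ⟨hx1, hx2, _, _, _⟩ := hxS
            obtain ⟨hy1, hy2, _, _, _⟩ := hyS
            simp only [Prod.mk.injEq] at hxy ⊢
            omega
        have hd2 : ((reps m).card : ℝ) ≤ ((m.divisors.card : ℝ))^2 := by
          have := reps_card_le m (by omega)
          exact_mod_cast this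
        have hdb : (m.divisors.card : ℝ) ≤ Real.exp (100 * Real.log m / Real.log (Real.log m)) :=
          divisor_bound m (by omega)
        have hratio : Real.log m / Real.log (Real.log m)
            ≤ 40 * Real.log R₁ / Real.log (Real.log R₁) := by
          apply log_ratio m R₁ hm18 hR₁
          rw [show ((m:ℕ):ℝ) = ((j:ℤ):ℝ) by exact_mod_cast congrArg (fun t : ℤ => (t:ℝ)) hmj]
          exact hbig
        have hfinal : ((fib.card : ℕ) : ℝ) ≤ Eexp := by
          have h1 : ((fib.card : ℕ) : ℝ) ≤ ((m.divisors.card : ℝ))^2 := by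
            calc ((fib.card : ℕ) : ℝ) ≤ ((reps m).card : ℝ) := by exact_mod_cast hinj
              _ ≤ _ := hd2
          have h2 : ((m.divisors.card : ℝ))^2
              ≤ (Real.exp (100 * Real.log m / Real.log (Real.log m)))^2 := by
            apply pow_le_pow_left₀ (by positivity) hdb
          have h3 : (Real.exp (100 * Real.log m / Real.log (Real.log m)))^2
              = Real.exp (200 * (Real.log m / Real.log (Real.log m))) := by
            rw [← Real.exp_nat_mul]
            congr 1
            ring
          have h4 : 200 * (Real.log m / Real.log (Real.log m))
              ≤ 8000 * Real.log R₁ / Real.log (Real.log R₁) := by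
            have := mul_le_mul_of_nonneg_left hratio (by norm_num : (0:ℝ) ≤ 200)
            calc 200 * (Real.log m / Real.log (Real.log m))
                ≤ 200 * (40 * Real.log R₁ / Real.log (Real.log R₁)) := this
              _ = 8000 * Real.log R₁ / Real.log (Real.log R₁) := by ring
          calc ((fib.card : ℕ) : ℝ) ≤ ((m.divisors.card : ℝ))^2 := h1
            _ ≤ (Real.exp (100 * Real.log m / Real.log (Real.log m)))^2 := h2
            _ = Real.exp (200 * (Real.log m / Real.log (Real.log m))) := h3
            _ ≤ Real.exp (8000 * Real.log R₁ / Real.log (Real.log R₁)) := Real.exp_le_exp.mpr h4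
            _ = Eexp := by rw [hEexp]
        linarith
  -- final summation
  have hsum : ((∑ j ∈ J, (Fs.filter (fun p => F p = j)).card : ℕ) : ℝ)
      ≤ (J.card : ℝ) * (2 + Eexp) := by
    push_cast
    calc ∑ j ∈ J, ((Fs.filter (fun p => F p = j)).card : ℝ)
        ≤ ∑ j ∈ J, (2 + Eexp) := Finset.sum_le_sum hfiber
      _ = (J.card : ℝ) * (2 + Eexp) := by rw [Finset.sum_const, nsmul_eq_mul]
  have h2E : 2 + Eexp ≤ 3 * Eexp := by linarith
  have hJ0 : (0:ℝ) ≤ (J.card : ℝ) := by positivity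
  calc ((∑ j ∈ J, (Fs.filter (fun p => F p = j)).card : ℕ) : ℝ)
      ≤ (J.card : ℝ) * (2 + Eexp) := hsum
    _ ≤ (32*(1+2*D)/π^2 + 1) * (3 * Eexp) := by
        apply mul_le_mul hJcard h2E (by linarith) (by positivity)
    _ = 3*(32*(1+2*D)/π^2 + 1) * Eexp := by ring
    _ = 3*(32*(1+2*D)/π^2 + 1) * Real.exp (8000 * Real.log R₁ / Real.log (Real.log R₁)) := by
        rw [hEexp]
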